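/- Let R be a commutative ring and {M_i}_{i ∈ Λ} a family of R-modules. The direct product ∏_{i ∈ Λ} M_i is a Lucas module if and only if each M_i is a Lucas module. -/

import Mathlib

open CategoryTheory

universe u

/-- An ideal is dense if its annihilator in `R` is zero. -/
def Ideal.IsDense {R : Type u} [CommRing R] (I : Ideal R) : Prop :=
  ∀ r : R, (∀ a ∈ I, a * r = 0) → r = 0

/-- An ideal is semi-regular if it contains a finitely generated dense subideal. -/
def Ideal.IsSemiRegular {R : Type u} [CommRing R] (I : Ideal R) : Prop :=
  ∃ J : Ideal R, J ≤ I ∧ J.FG ∧ J.IsDense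

/-- Membership in `𝒬`: finitely generated semi-regular ideals. -/
def Ideal.IsInQ {R : Type u} [CommRing R] (I : Ideal R) : Prop :=
  I.FG ∧ I.IsSemiRegular

/-- An `R`-module is `𝒬`-torsion if every element is annihilated by some `I ∈ 𝒬`. -/
def IsQTorsion (R : Type u) [CommRing R] (M : Type u) [AddCommGroup M] [Module R M] : Prop :=
  ∀ x : M, ∃ I : Ideal R, I.IsInQ ∧ ∀ a ∈ I, a • x = 0

/-- An `R`-module is `𝒬`-torsion-free if no nonzero element is annihilated by any `I ∈ 𝒬`. -/
def IsQTorsionFree (R : Type u) [CommRing R] (M : Type u) [AddCommGroup M] [Module R M] : Prop :=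
  ∀ x : M, (∃ I : Ideal R, I.IsInQ ∧ ∀ a ∈ I, a • x = 0) → x = 0

/-- `Ext¹_R(A, B) = 0`. -/
def Ext1Vanishes (R : Type u) [CommRing R] (A B : Type u) [AddCommGroup A] [Module R A]
    [AddCommGroup B] [Module R B] : Prop :=
  Subsingleton (((Ext R (ModuleCat.{u} R) 1).obj (Opposite.op (ModuleCat.of R A))).obj
    (ModuleCat.of R B))

/-- A Lucas module is a `𝒬`-torsion-free module `M` with `Ext¹_R(R/I, M) = 0` for all `I ∈ 𝒬`. -/
def IsLucasModule (R : Type u) [CommRing R] (M : Type u) [AddCommGroup M] [Module R M] : Prop :=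
  IsQTorsionFree R M ∧ ∀ I : Ideal R, I.IsInQ → Ext1Vanishes R (R ⧸ I) M

section Aux

open CategoryTheory Limits

variable {R : Type u} [CommRing R]

/-- The lifting criterion equivalent to vanishing of `Ext¹`, expressed in terms of a
projective resolution complex `K`. -/
def ExtCrit (K : ChainComplex (ModuleCat.{u} R) ℕ) (Y : ModuleCat.{u} R) : Prop :=
  ∀ x : K.X 1 ⟶ Y, K.d 2 1 ≫ x = 0 → ∃ y : K.X 0 ⟶ Y, K.d 1 0 ≫ y = x

lemma ModuleCat.subsingleton_iff_isZero (N : ModuleCat.{u} R) :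
    Subsingleton N ↔ IsZero N := by
  constructor
  · intro h
    exact ModuleCat.isZero_of_subsingleton N
  · intro h
    refine ⟨fun a b => ?_⟩
    have h0 : (𝟙 N : N ⟶ N) = 0 := h.eq_of_src _ _
    have ha : a = (𝟙 N : N ⟶ N) a := rfl
    have hb : b = (𝟙 N : N ⟶ N) b := rfl
    rw [ha, hb, h0]
    rfl

lemma ext1Vanishes_iff_extCrit (A : Type u) [AddCommGroup A] [Module R A]
    (P : ProjectiveResolution (ModuleCat.of R A)) (B : Type u) [AddCommGroup B] [Module R B] :
    Ext1Vanishes R A B ↔ ExtCrit P.complex (ModuleCat.of R B) := by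
  set Y := ModuleCat.of R B
  have h1 : Ext1Vanishes R A B ↔
      IsZero ((P.complex.linearYonedaObj R Y).homology 1) := by
    rw [Ext1Vanishes, ModuleCat.subsingleton_iff_isZero]
    constructor
    · intro h; exact h.of_iso (P.isoExt 1 Y).symm
    · intro h; exact h.of_iso (P.isoExt 1 Y)
  rw [h1, ← HomologicalComplex.exactAt_iff_isZero_homology,
    HomologicalComplex.exactAt_iff' (P.complex.linearYonedaObj R Y) 0 1 2 (by simp) (by simp),
    ShortComplex.moduleCat_exact_iff]
  constructor
  · intro h x hx
    obtain ⟨y, hy⟩ := h x (by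
      show (Linear.leftComp R Y (P.complex.d 2 1)) x = 0
      simpa [Linear.leftComp] using hx)
    refine ⟨y, ?_⟩
    exact hy
  · intro h x hx
    obtain ⟨y, hy⟩ := h x (by
      have : (Linear.leftComp R Y (P.complex.d 2 1)) x = 0 := by
        exact hx
      simpa [Linear.leftComp] using this)
    refine ⟨y, ?_⟩
    show (Linear.leftComp R Y (P.complex.d 1 0)) y = x
    simpa [Linear.leftComp] using hy

lemma extCrit_pi (K : ChainComplex (ModuleCat.{u} R) ℕ) {ι : Type u} (M : ι → Type u)
    [∀ i, AddCommGroup (M i)] [∀ i, Module R (M i)] :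
    ExtCrit K (ModuleCat.of R (∀ i, M i)) ↔ ∀ i, ExtCrit K (ModuleCat.of R (M i)) := by
  classical
  constructor
  · intro h i g hg
    set G : K.X 1 ⟶ ModuleCat.of R (∀ i, M i) :=
      g ≫ ModuleCat.ofHom (LinearMap.single R M i) with hGdef
    have hG : K.d 2 1 ≫ G = 0 := by
      rw [hGdef, ← Category.assoc, hg, Limits.zero_comp]
    obtain ⟨F, hF⟩ := h G hG
    refine ⟨F ≫ ModuleCat.ofHom (LinearMap.proj i), ?_⟩
    rw [← Category.assoc, hF, hGdef]
    ext x
    show (LinearMap.single R M i (g x)) i = g x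
    simp
  · intro h G hG
    choose f hf using fun i => h i (G ≫ ModuleCat.ofHom (LinearMap.proj i))
      (by rw [← Category.assoc, hG, Limits.zero_comp])
    refine ⟨ModuleCat.ofHom (LinearMap.pi fun i => (f i).hom), ?_⟩
    ext x i
    have := congrArg (fun φ => φ x) (hf i)
    exact this

lemma ext1Vanishes_pi (A : Type u) [AddCommGroup A] [Module R A] {ι : Type u} (M : ι → Type u)
    [∀ i, AddCommGroup (M i)] [∀ i, Module R (M i)] :
    Ext1Vanishes R A (∀ i, M i) ↔ ∀ i, Ext1Vanishes R A (M i) := by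
  have P : ProjectiveResolution (ModuleCat.of R A) :=
    (HasProjectiveResolution.out (Z := ModuleCat.of R A)).some
  rw [ext1Vanishes_iff_extCrit A P, extCrit_pi]
  exact forall_congr' fun i => (ext1Vanishes_iff_extCrit A P (M i)).symm

end Aux

/-- A direct product `∏ᵢ Mᵢ` is a Lucas module iff each `Mᵢ` is a Lucas module. -/
theorem prod_lucas_iff (R : Type u) [CommRing R] (ι : Type u)
    (M : ι → Type u) [∀ i, AddCommGroup (M i)] [∀ i, Module R (M i)] :
    IsLucasModule R (∀ i, M i) ↔ ∀ i, IsLucasModule R (M i) := by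
  classical
  constructor
  · rintro ⟨htf, hext⟩ i
    constructor
    · rintro x ⟨I, hI, hann⟩
      have hx : (Pi.single i x : ∀ j, M j) = 0 := by
        refine htf _ ⟨I, hI, fun a ha => ?_⟩
        funext j
        by_cases hji : j = i
        · subst hji
          simpa using hann a ha
        · simp [Pi.single_eq_of_ne hji]
      have := congrFun hx i
      simpa using this
    · intro I hI
      exact (ext1Vanishes_pi (R ⧸ I) M).mp (hext I hI) i
  · intro h
    constructor
    · rintro x ⟨I, hI, hann⟩
      funext i
      refine (h i).1 (x i) ⟨I, hI, fun a ha => ?_⟩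
      have := congrFun (hann a ha) i
      simpa using this
    · intro I hI
      exact (ext1Vanishes_pi (R ⧸ I) M).mpr fun i => (h i).2 I hI
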